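/- For x⃗, x⃗ᴼ ∈ ℝ³, let ad(x⃗, x⃗ᴼ) denote the linear endomorphism of ℝ³ × ℝ³ given by (u, w) ↦ (−x⃗ × u, −x⃗ᴼ × u − x⃗ × w). Then for all x⃗, x⃗ᴼ, y⃗, y⃗ᴼ ∈ ℝ³, the trace of the composition ad(x⃗, x⃗ᴼ) ∘ ad(y⃗, y⃗ᴼ) equals −4 (x⃗ · y⃗). (This computes the Killing form of the Lie algebra 𝔰𝔢(3) in the motor representation at a point O, showing it is distinct from the screw scalar product.) -/

import Mathlib

set_option autoImplicit false

open Matrix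

/-- The adjoint endomorphism of `𝔰𝔢(3)` in the motor representation at an
origin `O`: for a screw with motor `(x⃗, x⃗ᴼ)`, it sends the motor `(u, w)`
to `(−x⃗ × u, −x⃗ᴼ × u − x⃗ × w)`. -/
def adMotor (x xO : Fin 3 → ℝ) :
    ((Fin 3 → ℝ) × (Fin 3 → ℝ)) →ₗ[ℝ] ((Fin 3 → ℝ) × (Fin 3 → ℝ)) where
  toFun p := (-(x ⨯₃ p.1), -(xO ⨯₃ p.1) - x ⨯₃ p.2)
  map_add' p q := by
    simp only [Prod.fst_add, Prod.snd_add, map_add, Prod.mk_add_mk, Prod.mk.injEq]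
    constructor <;> abel
  map_smul' c p := by
    simp only [Prod.smul_fst, Prod.smul_snd, _root_.map_smul, RingHom.id_apply,
      Prod.smul_mk, Prod.mk.injEq, smul_sub, smul_neg]

/-- The Killing form of `𝔰𝔢(3)` in the motor representation:
`trace (ad x ∘ ad y) = −4 (x⃗ · y⃗)`. -/
theorem killing_form_se3 (x xO y yO : Fin 3 → ℝ) :
    LinearMap.trace ℝ ((Fin 3 → ℝ) × (Fin 3 → ℝ))
      (adMotor x xO ∘ₗ adMotor y yO) = -4 * (x ⬝ᵥ y) := by
  rw [LinearMap.trace_eq_matrix_trace ℝ ((Pi.basisFun ℝ (Fin 3)).prod (Pi.basisFun ℝ (Fin 3)))]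
  simp only [Matrix.trace, Matrix.diag, LinearMap.toMatrix_apply, adMotor,
    LinearMap.coe_comp, Function.comp_apply, LinearMap.coe_mk, AddHom.coe_mk,
    Module.Basis.prod_apply, Module.Basis.prod_repr_inl, Module.Basis.prod_repr_inr,
    Pi.basisFun_apply, Pi.basisFun_repr, Fin.sum_univ_succ,
    Fin.sum_univ_zero, dotProduct, Fintype.sum_sum_type]
  simp [crossProduct, Fin.sum_univ_succ, Matrix.cons_val_zero, Matrix.cons_val_one]
  ring
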